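/- Let E_{r,n}(x_1,…,x_n) = ∑_{1≤i_1<…<i_r≤n} x_{i_1}⋯x_{i_r} be the elementary symmetric polynomial of degree r in n variables, with 0 ≤ r ≤ n. Then E_{r,n} is nonvanishing on H^n. -/

import Mathlib

open Polynomial

/-- Key lemma: for a product of linear factors with all roots strictly to the left of `z`,
the value is nonzero and the logarithmic derivative has positive real part. -/
lemma keyD (s : Multiset ℂ) (z : ℂ) (hs : ∀ r ∈ s, 0 < (z - r).re) :
    (s.map (fun r => X - C r)).prod.eval z ≠ 0 ∧
    (s ≠ 0 → 0 < (((derivative (s.map (fun r => X - C r)).prod).eval z) /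
      ((s.map (fun r => X - C r)).prod.eval z)).re) := by
  induction s using Multiset.induction with
  | empty => simp
  | cons a t ih =>
    have ha : 0 < (z - a).re := hs a (Multiset.mem_cons_self a t)
    have ht : ∀ r ∈ t, 0 < (z - r).re := fun r hr => hs r (Multiset.mem_cons_of_mem hr)
    obtain ⟨hne, hrat⟩ := ih ht
    have hza : z - a ≠ 0 := fun h => by simp [h] at ha
    set q := (t.map (fun r => X - C r)).prod with hq
    have hprod : ((a ::ₘ t).map (fun r => X - C r)).prod = (X - C a) * q := by
      rw [Multiset.map_cons, Multiset.prod_cons]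
    have heval : (((a ::ₘ t).map (fun r => X - C r)).prod).eval z = (z - a) * q.eval z := by
      rw [hprod]; simp
    have hder : (derivative (((a ::ₘ t).map (fun r => X - C r)).prod)).eval z
        = q.eval z + (z - a) * (derivative q).eval z := by
      rw [hprod, derivative_mul]; simp
    constructor
    · rw [heval]; exact mul_ne_zero hza hne
    · intro _
      have key : ((derivative (((a ::ₘ t).map (fun r => X - C r)).prod)).eval z) /
          ((((a ::ₘ t).map (fun r => X - C r)).prod).eval z)
          = (z - a)⁻¹ + (derivative q).eval z / q.eval z := by
        rw [heval, hder]
        field_simp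
      rw [key, Complex.add_re]
      have h1 : 0 < ((z - a)⁻¹).re := by
        rw [Complex.inv_re]
        exact div_pos ha (Complex.normSq_pos.2 hza)
      rcases eq_or_ne t 0 with h0 | h0
      · subst h0
        simp only [hq, Multiset.map_zero, Multiset.prod_zero, derivative_one]
        simpa using h1
      · have h2 := hrat h0
        linarith

/-- Half-plane Gauss–Lucas: if all roots of `p` are in the open left half-plane,
so are the roots of `p'`. -/
lemma halfPlaneGL (p : Polynomial ℂ) (hp : ∀ r ∈ p.roots, r.re < 0) :
    ∀ z ∈ (derivative p).roots, z.re < 0 := by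
  intro z hz
  by_contra hre
  push_neg at hre
  have hd0 : derivative p ≠ 0 := fun h => by simp [h] at hz
  have hp0 : p ≠ 0 := fun h => hd0 (by simp [h])
  have hzroot : (derivative p).eval z = 0 := (mem_roots hd0).1 hz
  have hsplit : Splits p := IsAlgClosed.splits p
  have heq := hsplit.eq_prod_roots
  have hcond : ∀ r ∈ p.roots, 0 < (z - r).re := by
    intro r hr
    have := hp r hr
    rw [Complex.sub_re]
    linarith
  obtain ⟨hne, hrat⟩ := keyD p.roots z hcond
  have hs0 : p.roots ≠ 0 := by
    intro h
    rw [h] at heq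
    simp only [Multiset.map_zero, Multiset.prod_zero, mul_one] at heq
    exact hd0 (by rw [heq]; simp)
  have hlc : p.leadingCoeff ≠ 0 := leadingCoeff_ne_zero.2 hp0
  have hder : (derivative p).eval z
      = p.leadingCoeff * (derivative ((p.roots.map (fun r => X - C r)).prod)).eval z := by
    conv_lhs => rw [heq]
    rw [derivative_C_mul]
    simp
  have hq0 : (derivative ((p.roots.map (fun r => X - C r)).prod)).eval z = 0 := by
    rw [hder] at hzroot
    exact (mul_eq_zero.1 hzroot).resolve_left hlc
  have := hrat hs0
  rw [hq0, zero_div] at this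
  simp at this

lemma iterGL (p : Polynomial ℂ) (hp : ∀ r ∈ p.roots, r.re < 0) (k : ℕ) :
    ∀ z ∈ (derivative^[k] p).roots, z.re < 0 := by
  induction k with
  | zero => simpa using hp
  | succ k ih =>
    rw [Function.iterate_succ_apply']
    exact halfPlaneGL _ ih

lemma iter_ne_zero (p : Polynomial ℂ) (hp : p ≠ 0) :
    ∀ k, k ≤ p.natDegree → derivative^[k] p ≠ 0 ∧ (derivative^[k] p).natDegree = p.natDegree - k := by
  intro k
  induction k with
  | zero => intro _; simpa using hp
  | succ k ih =>
    intro hk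
    obtain ⟨h0, hdeg⟩ := ih (Nat.le_of_succ_le hk)
    have hpos : 0 < (derivative^[k] p).natDegree := by omega
    have hdd := degree_derivative_eq _ hpos
    rw [Function.iterate_succ_apply']
    constructor
    · intro h
      rw [h, degree_zero] at hdd
      exact (WithBot.bot_ne_coe (a := (derivative^[k] p).natDegree - 1)) hdd
    · rw [natDegree_eq_of_degree_eq_some hdd, hdeg]
      omega

theorem stmt14 {n r : ℕ} (h : r ≤ n) (x : Fin n → ℂ)
    (hx : ∀ i, 0 < (x i).re) :
    MvPolynomial.eval x (MvPolynomial.esymm (Fin n) ℂ r) ≠ 0 := by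
  set p : Polynomial ℂ := ∏ i : Fin n, (X + C (x i)) with hp
  have hmonic : p.Monic := monic_prod_of_monic _ _ (fun i _ => monic_X_add_C _)
  have hp0 : p ≠ 0 := hmonic.ne_zero
  have hdeg : p.natDegree = n := by
    rw [hp, natDegree_prod _ _ (fun i _ => (monic_X_add_C (x i)).ne_zero)]
    simp
  have hroots : ∀ z ∈ p.roots, z.re < 0 := by
    intro z hz
    have hev : p.eval z = 0 := (mem_roots hp0).1 hz
    rw [hp, eval_prod] at hev
    obtain ⟨i, _, hi⟩ := Finset.prod_eq_zero_iff.1 hev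
    simp only [eval_add, eval_X, eval_C] at hi
    have : z = -x i := by linear_combination hi
    rw [this]
    simpa using hx i
  set k := n - r with hk
  have hkle : k ≤ p.natDegree := by omega
  obtain ⟨hq0, _⟩ := iter_ne_zero p hp0 k hkle
  have hzero_notroot : (0 : ℂ) ∉ (derivative^[k] p).roots := by
    intro h0
    have := iterGL p hroots k 0 h0
    simp at this
  have heval0 : (derivative^[k] p).eval 0 ≠ 0 := by
    intro h0
    exact hzero_notroot ((mem_roots hq0).2 h0)
  have hcoeff0 : (derivative^[k] p).eval 0 = (derivative^[k] p).coeff 0 := by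
    rw [coeff_zero_eq_eval_zero]
  have hcoeff : (derivative^[k] p).coeff 0 = (0 + k).descFactorial k • p.coeff (0 + k) :=
    coeff_iterate_derivative p 0
  have hpk : p.coeff k ≠ 0 := by
    intro hc
    apply heval0
    rw [hcoeff0, hcoeff]
    simp [hc]
  have hvieta : p.coeff k = ∑ t ∈ Finset.univ.powersetCard (n - k), ∏ i ∈ t, x i := by
    rw [hp, Finset.prod_X_add_C_coeff _ _ (by simp [hk])]
    simp
  have hesymm : MvPolynomial.eval x (MvPolynomial.esymm (Fin n) ℂ r)
      = ∑ t ∈ Finset.univ.powersetCard r, ∏ i ∈ t, x i := by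
    rw [MvPolynomial.esymm]
    simp [MvPolynomial.eval_prod]
  rw [hesymm]
  have hnk : n - k = r := by omega
  rw [hvieta, hnk] at hpk
  exact hpk
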